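/- Fix a dimension d ≥ 1 and R > 0. For every nonempty compact set K₀ ⊆ ℝ^d and every r > 0, the set {K ∈ 𝒦 : hausdorffEdist(K ∩ closedBall(0,R), K₀) < r} is a Borel subset of 𝒦. Since such sets generate the Borel σ-algebra on the hyperspace of compact subsets, this expresses the Borel measurability of the map K ↦ K ∩ closedBall(0,R) asserted in Lemma 2.1(a) of the paper. -/

import Mathlib

open TopologicalSpace Metric Set Filter
open scoped NNReal ENNReal

set_option maxHeartbeats 1000000

section Aux

variable {X : Type*} [MetricSpace X]

/-- In a proper metric space, `{K : NonemptyCompacts X | (K ∩ C).Nonempty}` is closed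
for closed `C`. -/
lemma aux_closed_hit [ProperSpace X] (C : Set X) (hC : IsClosed C) :
    IsClosed {K : NonemptyCompacts X | ((K : Set X) ∩ C).Nonempty} := by
  rw [← isSeqClosed_iff_isClosed]
  intro Ks K hmem hK
  choose x hxK hxC using hmem
  have hdist : Tendsto (fun n => dist (Ks n) K) atTop (nhds 0) :=
    tendsto_iff_dist_tendsto_zero.mp hK
  obtain ⟨N, hN⟩ : ∃ N, ∀ n ≥ N, dist (Ks n) K < 1 := by
    have := (hdist.eventually (gt_mem_nhds one_pos))
    exact eventually_atTop.mp this
  have hfin : ∀ n : ℕ, EMetric.hausdorffEdist ((Ks n : Set X)) (K : Set X) ≠ ⊤ := fun n =>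
    hausdorffEdist_ne_top_of_nonempty_of_bounded (Ks n).nonempty K.nonempty
      (Ks n).isCompact.isBounded K.isCompact.isBounded
  have hinf : ∀ n : ℕ, infDist (x n) (K : Set X) ≤ dist (Ks n) K := by
    intro n
    rw [NonemptyCompacts.dist_eq]
    exact infDist_le_hausdorffDist_of_mem (hxK n) (hfin n)
  -- all points `x (n + N)` lie in the compact set `cthickening 1 K`
  have hmemM : ∀ n : ℕ, x (n + N) ∈ cthickening 1 (K : Set X) := by
    intro n
    have h1 : infDist (x (n + N)) (K : Set X) ≤ 1 :=
      (hinf (n + N)).trans (hN (n + N) (Nat.le_add_left _ _)).le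
    rw [mem_cthickening_iff]
    exact (ENNReal.le_ofReal_iff_toReal_le (infEdist_ne_top K.nonempty)
      zero_le_one).2 h1
  have hMc : IsCompact (cthickening 1 (K : Set X)) := K.isCompact.cthickening
  obtain ⟨a, haM, φ, hφ, ha⟩ := hMc.tendsto_subseq hmemM
  have haC : a ∈ C := hC.isSeqClosed (fun k => hxC (φ k + N)) ha
  have haK : a ∈ (K : Set X) := by
    have htend : Tendsto (fun k => infDist (x (φ k + N)) (K : Set X)) atTop
        (nhds (infDist a (K : Set X))) :=
      ((continuous_infDist_pt (K : Set X)).continuousAt).tendsto.comp ha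
    have hsub : Tendsto (fun k => φ k + N) atTop atTop :=
      tendsto_atTop_mono (fun k => Nat.le_add_right (φ k) N) hφ.tendsto_atTop
    have hzero : Tendsto (fun k => dist (Ks (φ k + N)) K) atTop (nhds 0) :=
      hdist.comp hsub
    have hle : infDist a (K : Set X) ≤ 0 := by
      refine le_of_tendsto_of_tendsto htend hzero ?_
      exact Eventually.of_forall fun k => hinf (φ k + N)
    have : infDist a (K : Set X) = 0 :=
      le_antisymm hle infDist_nonneg
    exact (K.isCompact.isClosed.mem_iff_infDist_zero K.nonempty).2 this
  exact ⟨a, haK, haC⟩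

/-- Characterization of `hausdorffEdist A K₀ ≤ ofReal q` by countably many conditions. -/
lemma aux_iff {A K₀ T : Set X} (hK₀ne : K₀.Nonempty)
    (hT : T ⊆ K₀) (hTd : K₀ ⊆ closure T) {q : ℝ} (hq : 0 ≤ q) :
    EMetric.hausdorffEdist A K₀ ≤ ENNReal.ofReal q ↔
      ((∀ n : ℕ, ¬ (A ∩ {x | q + 1 / ((n : ℝ) + 1) ≤ infDist x K₀}).Nonempty) ∧
       (∀ y ∈ T, ∀ n : ℕ, (A ∩ closedBall y (q + 1 / ((n : ℝ) + 1))).Nonempty)) := by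
  have hsplit : EMetric.hausdorffEdist A K₀ ≤ ENNReal.ofReal q ↔
      (∀ x ∈ A, EMetric.infEdist x K₀ ≤ ENNReal.ofReal q) ∧
      (∀ y ∈ K₀, EMetric.infEdist y A ≤ ENNReal.ofReal q) := by
    constructor
    · intro h
      refine ⟨fun x hx => (EMetric.infEdist_le_hausdorffEdist_of_mem hx).trans h,
        fun y hy => ?_⟩
      have h' : EMetric.hausdorffEdist K₀ A ≤ ENNReal.ofReal q := by
        rw [show EMetric.hausdorffEdist K₀ A = EMetric.hausdorffEdist A K₀ from hausdorffEDist_comm]; exact h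
      exact (EMetric.infEdist_le_hausdorffEdist_of_mem hy).trans h'
    · rintro ⟨h1, h2⟩
      exact EMetric.hausdorffEdist_le_of_infEdist h1 h2
  rw [hsplit]
  have hCiff : (∀ x ∈ A, EMetric.infEdist x K₀ ≤ ENNReal.ofReal q) ↔
      (∀ n : ℕ, ¬ (A ∩ {x | q + 1 / ((n : ℝ) + 1) ≤ infDist x K₀}).Nonempty) := by
    constructor
    · intro h n ⟨x, hxA, hxS⟩
      have hID : infDist x K₀ = (EMetric.infEdist x K₀).toReal := rfl
      have h1 : (EMetric.infEdist x K₀).toReal ≤ q :=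
        (ENNReal.le_ofReal_iff_toReal_le (infEdist_ne_top hK₀ne) hq).1 (h x hxA)
      have hpos : (0:ℝ) < 1 / ((n : ℝ) + 1) := by positivity
      have hxS' : q + 1 / ((n : ℝ) + 1) ≤ infDist x K₀ := hxS
      linarith [hID]
    · intro h x hxA
      refine (ENNReal.le_ofReal_iff_toReal_le (a := EMetric.infEdist x K₀) (infEdist_ne_top hK₀ne) hq).2 ?_
      by_contra hlt
      push_neg at hlt
      obtain ⟨n, hn⟩ := exists_nat_one_div_lt (sub_pos.2 hlt)
      have hID : infDist x K₀ = (EMetric.infEdist x K₀).toReal := rfl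
      exact h n ⟨x, hxA, by simp only [mem_setOf_eq]; linarith [hID]⟩
  rw [hCiff]
  refine and_congr Iff.rfl ?_
  constructor
  · intro h y hyT n
    have hy : y ∈ K₀ := hT hyT
    have hpos : (0:ℝ) < q + 1 / ((n : ℝ) + 1) := by positivity
    have hlt : EMetric.infEdist y A < ENNReal.ofReal (q + 1 / ((n : ℝ) + 1)) :=
      lt_of_le_of_lt (h y hy) ((ENNReal.ofReal_lt_ofReal_iff hpos).2 (by
        have : (0:ℝ) < 1 / ((n : ℝ) + 1) := by positivity
        linarith))
    obtain ⟨z, hzA, hz⟩ := EMetric.infEdist_lt_iff.1 hlt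
    rw [edist_lt_ofReal] at hz
    exact ⟨z, hzA, by rw [mem_closedBall, dist_comm]; exact hz.le⟩
  · intro h y hy
    -- A is nonempty
    have hTne : T.Nonempty := by
      rcases hK₀ne with ⟨y₀, hy₀⟩
      have := hTd hy₀
      exact closure_nonempty_iff.1 ⟨y₀, this⟩
    obtain ⟨y₀, hy₀T⟩ := hTne
    obtain ⟨x₀, hx₀A, _⟩ := h y₀ hy₀T 0
    have hAne : A.Nonempty := ⟨x₀, hx₀A⟩
    refine (ENNReal.le_ofReal_iff_toReal_le (a := EMetric.infEdist y A) (infEdist_ne_top hAne) hq).2 ?_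
    have hID : (EMetric.infEdist y A).toReal = infDist y A := rfl
    rw [hID]
    refine le_of_forall_pos_le_add fun ε hε => ?_
    obtain ⟨n, hn⟩ := exists_nat_one_div_lt (half_pos hε)
    obtain ⟨y', hy'T, hyy'⟩ := Metric.mem_closure_iff.1 (hTd hy) (ε / 2) (half_pos hε)
    obtain ⟨z, hzA, hzball⟩ := h y' hy'T n
    rw [mem_closedBall] at hzball
    have h1 : infDist y A ≤ dist y z := infDist_le_dist_of_mem hzA
    have h2 : dist y z ≤ dist y y' + dist y' z := dist_triangle _ _ _
    have h3 : dist y' z = dist z y' := dist_comm _ _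
    linarith
  

end Aux

/-- Lemma 2.1(a): the sets `{K : hausdorffEdist (K ∩ closedBall 0 R, K₀) < r}` are
Borel in the hyperspace of nonempty compact subsets of `ℝ^d`. -/
theorem stmt9 (d : ℕ) (hd : 1 ≤ d) (R r : ℝ) (hR : 0 < R) (hr : 0 < r)
    (K₀ : Set (EuclideanSpace ℝ (Fin d))) (hK₀c : IsCompact K₀) (hK₀ne : K₀.Nonempty) :
    @MeasurableSet (NonemptyCompacts (EuclideanSpace ℝ (Fin d)))
      (borel (NonemptyCompacts (EuclideanSpace ℝ (Fin d))))
      {K : NonemptyCompacts (EuclideanSpace ℝ (Fin d)) |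
        EMetric.hausdorffEdist
          ((K : Set (EuclideanSpace ℝ (Fin d))) ∩ Metric.closedBall 0 R) K₀
          < ENNReal.ofReal r} := by
  classical
  letI m : MeasurableSpace (NonemptyCompacts (EuclideanSpace ℝ (Fin d))) := borel _
  haveI : BorelSpace (NonemptyCompacts (EuclideanSpace ℝ (Fin d))) := ⟨rfl⟩
  set B : Set (EuclideanSpace ℝ (Fin d)) := Metric.closedBall 0 R with hB
  -- countable dense subset of K₀
  obtain ⟨t, htc, htd⟩ := TopologicalSpace.exists_countable_dense ↥K₀
  set T : Set (EuclideanSpace ℝ (Fin d)) := Subtype.val '' t with hTdef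
  have hTc : T.Countable := htc.image _
  have hTsub : T ⊆ K₀ := Subtype.coe_image_subset _ _
  have hTd : K₀ ⊆ closure T := by
    intro y hy
    have h1 : (⟨y, hy⟩ : ↥K₀) ∈ closure t := htd _
    have h2 : Subtype.val '' closure t ⊆ closure T :=
      image_closure_subset_closure_image continuous_subtype_val
    exact h2 ⟨⟨y, hy⟩, h1, rfl⟩
  have hEq : {K : NonemptyCompacts (EuclideanSpace ℝ (Fin d)) |
      EMetric.hausdorffEdist ((K : Set (EuclideanSpace ℝ (Fin d))) ∩ B) K₀ < ENNReal.ofReal r} =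
      ⋃ (q : ℚ), ⋃ (_ : 0 ≤ (q : ℝ) ∧ (q : ℝ) < r),
        ((⋂ n : ℕ, {K : NonemptyCompacts (EuclideanSpace ℝ (Fin d)) |
            ((K : Set (EuclideanSpace ℝ (Fin d))) ∩ (B ∩ {x | (q : ℝ) + 1 / ((n : ℝ) + 1) ≤ infDist x K₀})).Nonempty}ᶜ) ∩
         (⋂ y ∈ T, ⋂ n : ℕ, {K : NonemptyCompacts (EuclideanSpace ℝ (Fin d)) |
            ((K : Set (EuclideanSpace ℝ (Fin d))) ∩ (B ∩ closedBall y ((q : ℝ) + 1 / ((n : ℝ) + 1)))).Nonempty})) := by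
    ext K
    simp only [mem_setOf_eq, mem_iUnion, mem_inter_iff, mem_iInter, mem_compl_iff,
      exists_prop]
    have hassocC : ∀ n : ℕ, ∀ q : ℝ,
        (K : Set (EuclideanSpace ℝ (Fin d))) ∩ (B ∩ {x | q + 1 / ((n : ℝ) + 1) ≤ infDist x K₀}) =
        ((K : Set (EuclideanSpace ℝ (Fin d))) ∩ B) ∩ {x | q + 1 / ((n : ℝ) + 1) ≤ infDist x K₀} :=
      fun n q => (inter_assoc _ _ _).symm
    have hassocD : ∀ (y : (EuclideanSpace ℝ (Fin d))) (n : ℕ) (q : ℝ),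
        (K : Set (EuclideanSpace ℝ (Fin d))) ∩ (B ∩ closedBall y (q + 1 / ((n : ℝ) + 1))) =
        ((K : Set (EuclideanSpace ℝ (Fin d))) ∩ B) ∩ closedBall y (q + 1 / ((n : ℝ) + 1)) :=
      fun y n q => (inter_assoc _ _ _).symm
    constructor
    · intro h
      obtain ⟨q, hq0, hq1, hq2⟩ := ENNReal.lt_iff_exists_rat_btwn.1 h
      have hcoe : ((Real.toNNReal q : ℝ≥0) : ℝ≥0∞) = ENNReal.ofReal (q : ℝ) := rfl
      rw [hcoe] at hq1 hq2
      have hqr : (q : ℝ) < r := by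
        have := (ENNReal.ofReal_lt_ofReal_iff hr).1 hq2
        exact this
      have hle : EMetric.hausdorffEdist ((K : Set (EuclideanSpace ℝ (Fin d))) ∩ B) K₀ ≤ ENNReal.ofReal (q : ℝ) :=
        hq1.le
      rw [aux_iff hK₀ne hTsub hTd (by exact_mod_cast hq0)] at hle
      refine ⟨q, ⟨by exact_mod_cast hq0, hqr⟩, fun n => ?_, fun y hy n => ?_⟩
      · rw [hassocC n (q : ℝ)]; exact hle.1 n
      · rw [hassocD y n (q : ℝ)]; exact hle.2 y hy n
    · rintro ⟨q, ⟨hq0, hqr⟩, h1, h2⟩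
      have hle : EMetric.hausdorffEdist ((K : Set (EuclideanSpace ℝ (Fin d))) ∩ B) K₀ ≤ ENNReal.ofReal (q : ℝ) := by
        rw [aux_iff hK₀ne hTsub hTd hq0]
        refine ⟨fun n => ?_, fun y hy n => ?_⟩
        · rw [← hassocC n (q : ℝ)]; exact h1 n
        · rw [← hassocD y n (q : ℝ)]; exact h2 y hy n
      exact lt_of_le_of_lt hle ((ENNReal.ofReal_lt_ofReal_iff hr).2 hqr)
  rw [hEq]
  refine MeasurableSet.iUnion fun q => MeasurableSet.iUnion fun _ => ?_
  refine MeasurableSet.inter ?_ ?_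
  · refine MeasurableSet.iInter fun n => ?_
    refine (MeasurableSet.compl ?_)
    refine (aux_closed_hit _ ?_).measurableSet
    exact isClosed_closedBall.inter (isClosed_le continuous_const (continuous_infDist_pt _))
  · refine MeasurableSet.biInter hTc fun y _ => ?_
    refine MeasurableSet.iInter fun n => ?_
    refine (aux_closed_hit _ ?_).measurableSet
    exact isClosed_closedBall.inter isClosed_closedBall
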